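/- Let Σ be an alphabet with at least three distinct symbols, including a and b. The language Σ*abΣ* of strings containing ab as a contiguous substring is not PTL-definable, whereas the language Σ*aΣ*bΣ* of strings containing ab as a (possibly non-contiguous) subsequence is PTL-definable. -/
import Mathlib


/-- PTL formulas over alphabet `α`: atoms, conjunction, negation, and the past operator. -/
inductive PTL (α : Type*) : Type _
  | atom : α → PTL α
  | conj : PTL α → PTL α → PTL α
  | neg : PTL α → PTL α
  | past : PTL α → PTL α

/-- Satisfaction of a PTL formula in string `w` at (1-based) position `n ∈ {1,…,N+1}`. -/
def PTL.Sat {α : Type*} (w : List α) : PTL α → ℕ → Prop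
  | .atom a, n => 1 ≤ n ∧ w[n - 1]? = some a
  | .conj ψ₁ ψ₂, n => PTL.Sat w ψ₁ n ∧ PTL.Sat w ψ₂ n
  | .neg ψ, n => ¬ PTL.Sat w ψ n
  | .past ψ, n => ∃ m, 1 ≤ m ∧ m < n ∧ PTL.Sat w ψ m

/-- A string `w` of length `N` satisfies `ψ` iff `w, N+1 ⊨ ψ`. -/
def PTL.Models {α : Type*} (w : List α) (ψ : PTL α) : Prop :=
  PTL.Sat w ψ (w.length + 1)

/-- A language is PTL-definable if it is the set of strings satisfying some PTL formula. -/
def PTLDefinable {α : Type*} (L : Set (List α)) : Prop :=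
  ∃ ψ : PTL α, ∀ w : List α, w ∈ L ↔ PTL.Models w ψ

/-! ### Auxiliary material -/

/-- Past-depth of a PTL formula. -/
def PTL.depth {α : Type*} : PTL α → ℕ
  | .atom _ => 0
  | .conj ψ₁ ψ₂ => max ψ₁.depth ψ₂.depth
  | .neg ψ => ψ.depth
  | .past ψ => ψ.depth + 1

/-- The alternating pattern `a c a c a c …` (0-based). -/
def PTLpat {α : Type*} (a c : α) (i : ℕ) : α := if i % 2 = 0 then a else c

/-- The word `(pattern of length m) ++ [b]`. -/
def PTLW {α : Type*} (a b c : α) (m : ℕ) : List α :=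
  (List.ofFn fun i : Fin m => PTLpat a c i.val) ++ [b]

lemma PTLW_length {α : Type*} (a b c : α) (m : ℕ) : (PTLW a b c m).length = m + 1 := by
  simp [PTLW]

lemma PTLW_getElem? {α : Type*} (a b c : α) (m i : ℕ) :
    (PTLW a b c m)[i]? = if i < m then some (PTLpat a c i) else if i = m then some b else none := by
  rw [PTLW, List.getElem?_append]
  simp only [List.length_ofFn, List.getElem?_ofFn]
  by_cases h : i < m
  · simp [List.ofFnNthVal, h]
  · have : i - m = 0 ∨ 0 < i - m := by omega
    rcases this with h0 | h0
    · simp [List.ofFnNthVal, h, h0]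
      omega
    · have hne : i ≠ m := by omega
      simp [List.ofFnNthVal, h, hne, List.getElem?_eq_none_iff]
      omega

/-- The back-and-forth relation between positions of `PTLW a b c (2k+1)` and
`PTLW a b c (2k+2)`, at remaining past-depth `j`. -/
def PTLRel (k j n n' : ℕ) : Prop :=
  (n = n' ∧ n ≤ 2*k+1) ∨
  (n % 2 = 1 ∧ n' % 2 = 1 ∧ n ≤ 2*k+1 ∧ n' ≤ 2*k+1 ∧ 2*j+1 ≤ n ∧ 2*j+1 ≤ n') ∨
  (n % 2 = 0 ∧ n' % 2 = 0 ∧ n ≤ 2*k ∧ n' ≤ 2*k+2 ∧ 2*j+2 ≤ n ∧ 2*j+2 ≤ n') ∨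
  (n = 2*k+2 ∧ n' = 2*k+3) ∨
  (n = 2*k+3 ∧ n' = 2*k+4)

set_option maxHeartbeats 1000000 in
lemma PTLRel.forth {k j n n' : ℕ} (hj : j + 1 ≤ k) (h : PTLRel k (j+1) n n')
    (m : ℕ) (h1 : 1 ≤ m) (h2 : m < n) :
    ∃ m', 1 ≤ m' ∧ m' < n' ∧ PTLRel k j m m' := by
  refine ⟨if m ≤ 2*k+1 ∧ m < n' then m else if m = 2*k+2 then 2*k+3
    else if m % 2 = n' % 2 then n' - 2 else n' - 1, ?_⟩
  simp only [PTLRel] at h ⊢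
  rcases h with h | h | h | h | h <;> split_ifs <;> omega

set_option maxHeartbeats 1000000 in
lemma PTLRel.back {k j n n' : ℕ} (hj : j + 1 ≤ k) (h : PTLRel k (j+1) n n')
    (m' : ℕ) (h1 : 1 ≤ m') (h2 : m' < n') :
    ∃ m, 1 ≤ m ∧ m < n ∧ PTLRel k j m m' := by
  refine ⟨if m' ≤ 2*k+1 ∧ m' < n then m' else if m' = 2*k+3 then 2*k+2
    else if m' = 2*k+2 ∧ n = 2*k+3 then 2*k
    else if m' % 2 = n % 2 then n - 2 else n - 1, ?_⟩
  simp only [PTLRel] at h ⊢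
  rcases h with h | h | h | h | h <;> split_ifs <;> omega

lemma PTLRel.letter {α : Type*} (a b c : α) {k j n n' : ℕ} (h : PTLRel k j n n')
    (h1 : 1 ≤ n) (h1' : 1 ≤ n') :
    (PTLW a b c (2*k+1))[n-1]? = (PTLW a b c (2*k+2))[n'-1]? := by
  rw [PTLW_getElem?, PTLW_getElem?]
  rcases h with ⟨rfl, h⟩ | ⟨ho, ho', hn, hn', _, _⟩ | ⟨he, he', hn, hn', hj2, hj'⟩ |
      ⟨rfl, rfl⟩ | ⟨rfl, rfl⟩
  · have hlt : n - 1 < 2*k+1 := by omega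
    have hlt' : n - 1 < 2*k+2 := by omega
    simp [hlt, hlt']
  · have hlt : n - 1 < 2*k+1 := by omega
    have hlt' : n' - 1 < 2*k+2 := by omega
    have e1 : (n-1) % 2 = 0 := by omega
    have e2 : (n'-1) % 2 = 0 := by omega
    simp [hlt, hlt', PTLpat, e1, e2]
  · have hlt : n - 1 < 2*k+1 := by omega
    have hlt' : n' - 1 < 2*k+2 := by omega
    have e1 : (n-1) % 2 = 1 := by omega
    have e2 : (n'-1) % 2 = 1 := by omega
    simp [hlt, hlt', PTLpat, e1, e2]
  · have e1 : ¬ (2*k+2-1 < 2*k+1) := by omega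
    have e2 : 2*k+2-1 = 2*k+1 := by omega
    have e3 : ¬ (2*k+3-1 < 2*k+2) := by omega
    have e4 : 2*k+3-1 = 2*k+2 := by omega
    simp [e1, e2, e3, e4]
  · have e1 : ¬ (2*k+3-1 < 2*k+1) := by omega
    have e2 : 2*k+3-1 ≠ 2*k+1 := by omega
    have e3 : ¬ (2*k+4-1 < 2*k+2) := by omega
    have e4 : 2*k+4-1 ≠ 2*k+2 := by omega
    simp [e1, e2, e3, e4]

/-- Key lemma: positions related at depth `j ≥ depth ψ` agree on `ψ`. -/
lemma PTL.key {α : Type*} (a b c : α) (k : ℕ) :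
    ∀ (ψ : PTL α) (j n n' : ℕ), ψ.depth ≤ j → j ≤ k → PTLRel k j n n' →
      (PTL.Sat (PTLW a b c (2*k+1)) ψ n ↔ PTL.Sat (PTLW a b c (2*k+2)) ψ n') := by
  intro ψ
  induction ψ with
  | atom d =>
    intro j n n' _ _ hR
    have h1 : 1 ≤ n ↔ 1 ≤ n' := by
      have := hR; simp only [PTLRel] at this; omega
    constructor
    · rintro ⟨hn, he⟩
      exact ⟨h1.mp hn, by rw [← hR.letter a b c hn (h1.mp hn)]; exact he⟩
    · rintro ⟨hn, he⟩
      exact ⟨h1.mpr hn, by rw [hR.letter a b c (h1.mpr hn) hn]; exact he⟩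
  | conj ψ₁ ψ₂ ih₁ ih₂ =>
    intro j n n' hd hk hR
    have hd1 : ψ₁.depth ≤ j := le_trans (le_max_left _ _) hd
    have hd2 : ψ₂.depth ≤ j := le_trans (le_max_right _ _) hd
    exact and_congr (ih₁ j n n' hd1 hk hR) (ih₂ j n n' hd2 hk hR)
  | neg ψ ih =>
    intro j n n' hd hk hR
    exact not_congr (ih j n n' hd hk hR)
  | past ψ ih =>
    intro j n n' hd hk hR
    obtain ⟨j', rfl⟩ : ∃ j', j = j' + 1 := ⟨j - 1, by
      have : 1 ≤ j := le_trans (Nat.succ_le_succ (Nat.zero_le _)) hd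
      omega⟩
    have hd' : ψ.depth ≤ j' := Nat.succ_le_succ_iff.mp hd
    constructor
    · rintro ⟨m, hm1, hm2, hms⟩
      obtain ⟨m', hm'1, hm'2, hR'⟩ := hR.forth hk m hm1 hm2
      exact ⟨m', hm'1, hm'2, (ih j' m m' hd' (by omega) hR').mp hms⟩
    · rintro ⟨m', hm'1, hm'2, hms⟩
      obtain ⟨m, hm1, hm2, hR'⟩ := hR.back hk m' hm'1 hm'2
      exact ⟨m, hm1, hm2, (ih j' m m' hd' (by omega) hR').mpr hms⟩

/-- Over an alphabet with at least three symbols including `a` and `b`,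
the language `Σ*abΣ*` (containing `ab` as a substring) is not PTL-definable, whereas
`Σ*aΣ*bΣ*` (containing `ab` as a subsequence) is PTL-definable. -/
theorem substring_vs_subsequence {α : Type*} [Fintype α] (a b : α) (hab : a ≠ b)
    (h3 : ∃ c : α, c ≠ a ∧ c ≠ b) :
    ¬ PTLDefinable {w : List α | ∃ u v : List α, w = u ++ a :: b :: v} ∧
      PTLDefinable {w : List α | ∃ u v x : List α, w = u ++ a :: v ++ b :: x} := by
  obtain ⟨c, hca, hcb⟩ := h3
  constructor
  · -- Σ*abΣ* is not definable
    rintro ⟨ψ, hψ⟩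
    set k := ψ.depth with hk
    have hRel : PTLRel k k (2*k+3) (2*k+4) := by
      unfold PTLRel
      exact Or.inr (Or.inr (Or.inr (Or.inr ⟨rfl, rfl⟩)))
    have hkey := PTL.key a b c k ψ k (2*k+3) (2*k+4) le_rfl le_rfl hRel
    -- w₁ = (ac)^k a b ∈ L
    have hmem : PTLW a b c (2*k+1) ∈ {w : List α | ∃ u v : List α, w = u ++ a :: b :: v} := by
      refine ⟨List.ofFn fun i : Fin (2*k) => PTLpat a c i.val, [], ?_⟩
      have hval : PTLpat a c (2*k) = a := by
        have h2 : (2*k) % 2 = 0 := by omega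
        simp [PTLpat, h2]
      rw [PTLW, List.ofFn_succ']
      simp [List.concat_eq_append, hval]
    -- w₂ = (ac)^{k+1} b ∉ L
    have hnmem : PTLW a b c (2*k+2) ∉ {w : List α | ∃ u v : List α, w = u ++ a :: b :: v} := by
      rintro ⟨u, v, huv⟩
      have hlen : u.length + 2 + v.length = 2*k+3 := by
        have := congrArg List.length huv
        simp [PTLW_length] at this
        omega
      have hga : (PTLW a b c (2*k+2))[u.length]? = some a := by
        rw [huv, List.getElem?_append]
        simp
      have hgb : (PTLW a b c (2*k+2))[u.length + 1]? = some b := by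
        rw [huv, List.getElem?_append]
        simp
      rw [PTLW_getElem?] at hga hgb
      have hu1 : u.length < 2*k+2 := by omega
      rw [if_pos hu1] at hga
      have hueven : u.length % 2 = 0 := by
        by_contra hodd
        have hc : PTLpat a c u.length = c := by simp [PTLpat, hodd]
        rw [hc] at hga
        exact hca (Option.some.injEq _ _ ▸ hga)
      have hu2 : u.length + 1 < 2*k+2 := by omega
      rw [if_pos hu2] at hgb
      have hc : PTLpat a c (u.length + 1) = c := by
        have h1 : (u.length + 1) % 2 = 1 := by omega
        simp [PTLpat, h1]
      rw [hc] at hgb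
      exact hcb (Option.some.injEq _ _ ▸ hgb)
    rw [hψ] at hmem hnmem
    unfold PTL.Models at hmem hnmem
    rw [PTLW_length] at hmem hnmem
    have e1 : 2*k+1+1+1 = 2*k+3 := by omega
    have e2 : 2*k+2+1+1 = 2*k+4 := by omega
    rw [e1] at hmem
    rw [e2] at hnmem
    exact hnmem (hkey.mp hmem)
  · -- Σ*aΣ*bΣ* is definable by P(π_b ∧ P π_a)
    refine ⟨.past (.conj (.atom b) (.past (.atom a))), fun w => ?_⟩
    constructor
    · rintro ⟨u, v, x, rfl⟩
      refine ⟨u.length + v.length + 2, by omega, by simp; omega,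
        ⟨⟨by omega, ?_⟩, u.length + 1, by omega, by omega, by omega, ?_⟩⟩
      · -- position u.length+v.length+2 carries b
        have e : u.length + v.length + 2 - 1 = u.length + v.length + 1 := by omega
        rw [e, List.getElem?_append]
        have hl : (u ++ a :: v).length = u.length + v.length + 1 := by
          rw [List.length_append, List.length_cons]; omega
        rw [hl, if_neg (lt_irrefl _), Nat.sub_self, List.getElem?_cons_zero]
      · -- position u.length+1 carries a
        have e : u.length + 1 - 1 = u.length := by omega
        rw [e, List.getElem?_append]
        have hl : u.length < (u ++ a :: v).length := by
          rw [List.length_append, List.length_cons]; omega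
        rw [if_pos hl, List.getElem?_append, if_neg (lt_irrefl _), Nat.sub_self,
          List.getElem?_cons_zero]
    · rintro ⟨m, hm1, hm2, ⟨⟨_, hgb⟩, l, hl1, hl2, _, hga⟩⟩
      obtain ⟨i, rfl⟩ : ∃ i, l = i + 1 := ⟨l - 1, by omega⟩
      obtain ⟨p, rfl⟩ : ∃ p, m = p + 1 := ⟨m - 1, by omega⟩
      simp only [Nat.add_sub_cancel] at hga hgb
      rw [List.getElem?_eq_some_iff] at hga hgb
      obtain ⟨hlw, hga⟩ := hga
      obtain ⟨hmw, hgb⟩ := hgb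
      have hip : i < p := by omega
      refine ⟨w.take i, (w.drop (i+1)).take (p - (i+1)), w.drop (p+1), ?_⟩
      have h1 : w = w.take i ++ w.drop i := (List.take_append_drop _ _).symm
      have h2 : w.drop i = a :: w.drop (i+1) := by
        rw [List.drop_eq_getElem_cons hlw, hga]
      have h3 : w.drop (i+1) = (w.drop (i+1)).take (p - (i+1)) ++ w.drop p := by
        have e3 : w.drop p = (w.drop (i+1)).drop (p - (i+1)) := by
          rw [List.drop_drop]
          congr 1
          omega
        rw [e3, List.take_append_drop]
      have h4 : w.drop p = b :: w.drop (p+1) := by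
        rw [List.drop_eq_getElem_cons hmw, hgb]
      conv_lhs => rw [h1, h2, h3, h4]
      simp
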